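/- Let n ≥ 2, ω a primitive n-th root of unity, and J ⊆ {1,…,n−1}. Let A = ℂ[z_1,…,z_{n−1}] with the scaling action of Ĥ = (μ_n)^{n−1}. Let H = {(ω^{a_r}) : Σ r·a_r ≡ 0 mod n} and H_J = {(ω^{a_r}) ∈ H : a_j ≡ 0 mod n for all j ∈ J}. Fix integers c_j ∈ {0,…,n−1} for j ∈ J and a subset K disjoint from J, and let I be the ideal of A generated by {z_j − ω^{c_j} : j ∈ J} ∪ {z_k : k ∈ K}. Then A^{H_J} = A^H + I^{H_J}, where I^{H_J} = I ∩ A^{H_J}. -/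

import Mathlib

open MvPolynomial

/-- The rescaling automorphism of `ℂ[z_1, …, z_{n-1}]` sending `z_i ↦ ω^{a_i} z_i`. -/
noncomputable def rescale3 (n : ℕ) (ω : ℂ) (a : Fin (n - 1) → ℤ) :
    MvPolynomial (Fin (n - 1)) ℂ →ₐ[ℂ] MvPolynomial (Fin (n - 1)) ℂ :=
  aeval (fun i => (ω ^ a i) • (X i : MvPolynomial (Fin (n - 1)) ℂ))

/-- Exponent tuples defining elements of `H`: `Σ r·a_r ≡ 0 mod n`
(variable `i : Fin (n-1)` corresponds to the index `r = i + 1`). -/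
def Hcond (n : ℕ) (a : Fin (n - 1) → ℤ) : Prop :=
  (n : ℤ) ∣ ∑ i : Fin (n - 1), (((i : ℕ) : ℤ) + 1) * a i

/-- Exponent tuples defining elements of `H_J`: in `H` and `a_j ≡ 0 mod n` for `j ∈ J`. -/
def HJcond (n : ℕ) (J : Finset (Fin (n - 1))) (a : Fin (n - 1) → ℤ) : Prop :=
  Hcond n a ∧ ∀ j ∈ J, (n : ℤ) ∣ a j

/-- `H`-invariance of a polynomial. -/
def invH (n : ℕ) (ω : ℂ) (p : MvPolynomial (Fin (n - 1)) ℂ) : Prop :=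
  ∀ a : Fin (n - 1) → ℤ, Hcond n a → rescale3 n ω a p = p

/-- `H_J`-invariance of a polynomial. -/
def invHJ (n : ℕ) (ω : ℂ) (J : Finset (Fin (n - 1))) (p : MvPolynomial (Fin (n - 1)) ℂ) :
    Prop :=
  ∀ a : Fin (n - 1) → ℤ, HJcond n J a → rescale3 n ω a p = p

/-- The ideal `I = ⟨z_j − ω^{c_j} (j ∈ J), z_k (k ∈ K)⟩`. -/
noncomputable def idealI (n : ℕ) (ω : ℂ) (J K : Finset (Fin (n - 1)))
    (c : Fin (n - 1) → ℕ) : Ideal (MvPolynomial (Fin (n - 1)) ℂ) :=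
  Ideal.span ((fun j => (X j : MvPolynomial (Fin (n - 1)) ℂ) - C (ω ^ c j)) '' (J : Set _)
    ∪ (fun k => (X k : MvPolynomial (Fin (n - 1)) ℂ)) '' (K : Set _))

lemma zpow_sum' {ι : Type*} (s : Finset ι) (f : ι → ℤ) {ω : ℂ} (h : ω ≠ 0) :
    ω ^ (∑ i ∈ s, f i) = ∏ i ∈ s, ω ^ f i := by
  classical
  induction s using Finset.induction with
  | empty => simp
  | insert _ _ hx ih => rw [Finset.sum_insert hx, Finset.prod_insert hx, zpow_add₀ h, ih]

lemma finset_gcd_bezout {ι : Type*} [DecidableEq ι] (S : Finset ι) (f : ι → ℤ) :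
    ∃ u : ι → ℤ, ∑ i ∈ S, u i * f i = S.gcd f := by
  induction S using Finset.induction with
  | empty => exact ⟨0, by simp⟩
  | @insert a S ha ih =>
    obtain ⟨u, hu⟩ := ih
    refine ⟨fun i => if i = a then Int.gcdA (f a) (S.gcd f)
      else Int.gcdB (f a) (S.gcd f) * u i, ?_⟩
    rw [Finset.sum_insert ha, Finset.gcd_insert, ← Int.coe_gcd, Int.gcd_eq_gcd_ab]
    dsimp only
    rw [if_pos rfl]
    have : ∑ i ∈ S, (if i = a then Int.gcdA (f a) (S.gcd f)
        else Int.gcdB (f a) (S.gcd f) * u i) * f i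
        = Int.gcdB (f a) (S.gcd f) * ∑ i ∈ S, u i * f i := by
      rw [Finset.mul_sum]
      refine Finset.sum_congr rfl fun i hi => ?_
      rw [if_neg (by rintro rfl; exact ha hi)]; ring
    rw [this, hu]; ring

lemma rescale3_monomial (n : ℕ) (ω : ℂ) (hω0 : ω ≠ 0) (a : Fin (n - 1) → ℤ)
    (b : Fin (n - 1) →₀ ℕ) (x : ℂ) :
    rescale3 n ω a (monomial b x)
      = ω ^ (∑ i : Fin (n - 1), a i * (b i : ℤ)) • monomial b x := by
  classical
  rw [rescale3, aeval_monomial]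
  have h1 : (b.prod fun i k => ((ω ^ a i) • (X i : MvPolynomial (Fin (n - 1)) ℂ)) ^ k)
      = C (∏ i ∈ b.support, ω ^ (a i * (b i : ℤ))) *
        (b.prod fun i k => (X i : MvPolynomial (Fin (n - 1)) ℂ) ^ k) := by
    rw [Finsupp.prod, Finsupp.prod, map_prod, ← Finset.prod_mul_distrib]
    refine Finset.prod_congr rfl fun i hi => ?_
    rw [smul_eq_C_mul, mul_pow, ← map_pow, ← zpow_natCast (ω ^ a i), ← zpow_mul]
  have h2 : (∏ i ∈ b.support, ω ^ (a i * (b i : ℤ)))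
      = ω ^ (∑ i : Fin (n - 1), a i * (b i : ℤ)) := by
    rw [zpow_sum' _ _ hω0]
    refine Finset.prod_subset (Finset.subset_univ b.support) fun i _ hi => ?_
    rw [Finsupp.notMem_support_iff.mp hi]; simp
  rw [h1, h2, algebraMap_eq, smul_eq_C_mul, monomial_eq]
  ring

lemma coeff_rescale3 (n : ℕ) (ω : ℂ) (hω0 : ω ≠ 0) (a : Fin (n - 1) → ℤ)
    (p : MvPolynomial (Fin (n - 1)) ℂ) (b : Fin (n - 1) →₀ ℕ) :
    coeff b (rescale3 n ω a p) = ω ^ (∑ i : Fin (n - 1), a i * (b i : ℤ)) * coeff b p := by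
  classical
  conv_lhs => rw [p.as_sum, map_sum]
  rw [coeff_sum]
  rw [Finset.sum_eq_single b]
  · rw [rescale3_monomial n ω hω0, coeff_smul, coeff_monomial, if_pos rfl, smul_eq_mul]
  · intro b' _ hne
    rw [rescale3_monomial n ω hω0, coeff_smul, coeff_monomial, if_neg hne, smul_zero]
  · intro hb
    rw [rescale3_monomial n ω hω0, coeff_smul, coeff_monomial, if_pos rfl,
      MvPolynomial.notMem_support_iff.mp hb, smul_zero]

lemma key_nt (n : ℕ) (hn : 2 ≤ n) (J : Finset (Fin (n - 1))) (b : Fin (n - 1) → ℤ)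
    (H : ∀ a : Fin (n - 1) → ℤ, HJcond n J a → (n : ℤ) ∣ ∑ i : Fin (n - 1), a i * b i) :
    ∃ k : ℤ, ∀ i, i ∉ J → (n : ℤ) ∣ b i - k * (((i : ℕ) : ℤ) + 1) := by
  classical
  have hn0 : (n : ℤ) ≠ 0 := by exact_mod_cast (by omega : n ≠ 0)
  set S : Finset (Fin (n - 1)) := Jᶜ with hS
  set r : Fin (n - 1) → ℤ := fun i => ((i : ℕ) : ℤ) + 1 with hr
  obtain ⟨u, hu⟩ := finset_gcd_bezout S r
  set d : ℤ := S.gcd r with hd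
  set g : ℤ := (Int.gcd d n : ℤ) with hg
  set A : ℤ := Int.gcdA d n with hA
  set B : ℤ := Int.gcdB d n with hB
  have hbez : g = d * A + (n : ℤ) * B := Int.gcd_eq_gcd_ab d n
  have hgn : g ∣ (n : ℤ) := Int.gcd_dvd_right _ _
  have hgr : ∀ i ∈ S, g ∣ r i := fun i hi =>
    dvd_trans (Int.gcd_dvd_left _ _) (Finset.gcd_dvd hi)
  have hgne : g ≠ 0 := by
    rw [hg]
    intro h
    rw [Int.natCast_eq_zero, Int.gcd_eq_zero_iff] at h
    exact hn0 h.2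
  set w : Fin (n - 1) → ℤ := fun i => A * u i with hw
  have hwsum : ∑ i ∈ S, w i * r i = g - (n : ℤ) * B := by
    have : ∑ i ∈ S, w i * r i = A * ∑ i ∈ S, u i * r i := by
      rw [Finset.mul_sum]; exact Finset.sum_congr rfl fun i _ => by rw [hw]; ring
    rw [this, hu, hbez]; ring
  -- helper for sums of functions supported on S
  have hsum : ∀ m t : Fin (n - 1) → ℤ,
      (∑ i : Fin (n - 1), (if i ∈ S then t i else 0) * m i) = ∑ i ∈ S, t i * m i := by
    intro m t
    simp [ite_mul, Finset.sum_ite_mem]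
  -- first auxiliary group element
  have hJS : ∀ j ∈ J, j ∉ S := fun j hj => by simp [hS, hj]
  set e : ℤ := (n : ℤ) / g with he
  have hge : g * e = (n : ℤ) := Int.mul_ediv_cancel' hgn
  have hene : e ≠ 0 := by rintro h; rw [h, mul_zero] at hge; exact hn0 hge.symm
  have h1 : (n : ℤ) ∣ e * ∑ i ∈ S, w i * b i := by
    have := H (fun i => if i ∈ S then e * w i else 0) ⟨?_, ?_⟩
    · rw [hsum b (fun i => e * w i)] at this
      convert this using 1
      rw [Finset.mul_sum]; exact Finset.sum_congr rfl fun i _ => by ring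
    · show (n : ℤ) ∣ ∑ i : Fin (n - 1), (((i : ℕ) : ℤ) + 1) * (if i ∈ S then e * w i else 0)
      have : ∑ i : Fin (n - 1), (((i : ℕ) : ℤ) + 1) * (if i ∈ S then e * w i else 0)
          = ∑ i ∈ S, (e * w i) * r i := by
        rw [← hsum r (fun i => e * w i)]
        exact Finset.sum_congr rfl fun i _ => by rw [hr]; ring
      rw [this]
      have : ∑ i ∈ S, (e * w i) * r i = e * (g - (n:ℤ) * B) := by
        rw [← hwsum, Finset.mul_sum]; exact Finset.sum_congr rfl fun i _ => by ring
      rw [this]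
      exact ⟨1 - e * B, by rw [mul_sub, mul_comm e g, hge]; ring⟩
    · intro j hj; simp [hJS j hj]
  set s : ℤ := ∑ i ∈ S, w i * b i with hs
  have hgs : g ∣ s := by
    obtain ⟨t, ht⟩ := h1
    rw [← hge] at ht
    refine ⟨t, mul_left_cancel₀ hene ?_⟩
    rw [ht]; ring
  set k : ℤ := s / g with hk'
  have hgk : g * k = s := Int.mul_ediv_cancel' hgs
  refine ⟨k, fun i0 hi0 => ?_⟩
  have hi0S : i0 ∈ S := by simp [hS, hi0]
  set q : ℤ := r i0 / g with hq
  have hgq : g * q = r i0 := Int.mul_ediv_cancel' (hgr i0 hi0S)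
  have h2 := H (fun i => (if i ∈ S then q * w i else 0) - (if i = i0 then 1 else 0)) ⟨?_, ?_⟩
  · have hsplit : ∑ i : Fin (n - 1),
        ((if i ∈ S then q * w i else 0) - (if i = i0 then 1 else 0)) * b i
        = q * s - b i0 := by
      have : ∀ i : Fin (n - 1), ((if i ∈ S then q * w i else 0) - (if i = i0 then 1 else 0)) * b i
          = (if i ∈ S then q * w i else 0) * b i - (if i = i0 then b i else 0) := by
        intro i; by_cases h : i = i0 <;> simp [h, hi0S] <;> ring
      rw [Finset.sum_congr rfl (fun i _ => this i), Finset.sum_sub_distrib,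
        hsum b (fun i => q * w i), Finset.sum_ite_eq' Finset.univ i0 b,
        if_pos (Finset.mem_univ i0), hs, Finset.mul_sum]
      congr 1
      exact Finset.sum_congr rfl fun i _ => by ring
    rw [hsplit] at h2
    have : b i0 - k * r i0 = -(q * s - b i0) := by
      rw [← hgk, ← hgq]; ring
    rw [this]
    exact (dvd_neg).mpr h2
  · show (n : ℤ) ∣ ∑ i : Fin (n - 1), (((i : ℕ) : ℤ) + 1) *
      ((if i ∈ S then q * w i else 0) - (if i = i0 then 1 else 0))
    have hsplit : ∑ i : Fin (n - 1), (((i : ℕ) : ℤ) + 1) *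
        ((if i ∈ S then q * w i else 0) - (if i = i0 then 1 else 0))
        = q * (g - (n : ℤ) * B) - r i0 := by
      have : ∀ i : Fin (n - 1), (((i : ℕ) : ℤ) + 1) *
          ((if i ∈ S then q * w i else 0) - (if i = i0 then 1 else 0))
          = (if i ∈ S then q * w i else 0) * r i - (if i = i0 then r i else 0) := by
        intro i; by_cases h : i = i0 <;> simp [h, hr, hi0S] <;> ring
      rw [Finset.sum_congr rfl (fun i _ => this i), Finset.sum_sub_distrib,
        hsum r (fun i => q * w i), Finset.sum_ite_eq' Finset.univ i0 r,
        if_pos (Finset.mem_univ i0)]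
      congr 1
      rw [← hwsum, Finset.mul_sum]
      exact Finset.sum_congr rfl fun i _ => by ring
    rw [hsplit]
    refine ⟨-(q * B), ?_⟩
    rw [mul_sub, mul_comm q g, hgq]; ring
  · intro j hj
    have hne : j ≠ i0 := by rintro rfl; exact hi0 hj
    simp [hJS j hj, hne]

lemma mk_monomial (n : ℕ) (ω : ℂ) (hω0 : ω ≠ 0) (J K : Finset (Fin (n - 1)))
    (c : Fin (n - 1) → ℕ) (b : Fin (n - 1) →₀ ℕ) (x : ℂ) :
    Ideal.Quotient.mk (idealI n ω J K c) (monomial b x)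
      = Ideal.Quotient.mk (idealI n ω J K c)
        (C (x * ω ^ (∑ j ∈ J, (c j : ℤ) * (b j : ℤ))) * ∏ i ∈ Jᶜ, X i ^ b i) := by
  classical
  have hXj : ∀ j ∈ J, Ideal.Quotient.mk (idealI n ω J K c) (X j)
      = Ideal.Quotient.mk (idealI n ω J K c) (C (ω ^ c j)) := by
    intro j hj
    rw [Ideal.Quotient.eq]
    exact Ideal.subset_span (Or.inl ⟨j, hj, rfl⟩)
  have hmono : (monomial b x : MvPolynomial (Fin (n - 1)) ℂ)
      = C x * ((∏ j ∈ J, X j ^ b j) * ∏ i ∈ Jᶜ, X i ^ b i) := by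
    rw [monomial_eq, Finsupp.prod_fintype _ _ (fun i => pow_zero _),
      Finset.prod_mul_prod_compl]
  have key : Ideal.Quotient.mk (idealI n ω J K c) (∏ j ∈ J, (X j : MvPolynomial (Fin (n - 1)) ℂ) ^ b j)
      = Ideal.Quotient.mk (idealI n ω J K c) (C (ω ^ (∑ j ∈ J, (c j : ℤ) * (b j : ℤ)))) := by
    rw [map_prod]
    have hterm : ∀ j ∈ J, (Ideal.Quotient.mk (idealI n ω J K c)) ((X j : MvPolynomial (Fin (n - 1)) ℂ) ^ b j)
        = Ideal.Quotient.mk (idealI n ω J K c) (C ((ω ^ c j) ^ b j)) := by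
      intro j hj
      rw [map_pow, hXj j hj, ← map_pow, ← map_pow]
    rw [Finset.prod_congr rfl hterm, ← map_prod, ← map_prod]
    congr 2
    rw [zpow_sum' J _ hω0]
    refine Finset.prod_congr rfl fun j hj => ?_
    rw [← pow_mul, ← zpow_natCast ω (c j * b j)]
    congr 1
  rw [hmono, map_mul, map_mul, key, ← map_mul, ← map_mul, map_mul C x, mul_assoc]

lemma diff_mem_I (n : ℕ) (ω : ℂ) (hω0 : ω ≠ 0) (J K : Finset (Fin (n - 1)))
    (c : Fin (n - 1) → ℕ) (b b' : Fin (n - 1) →₀ ℕ) (hbb : ∀ i, i ∉ J → b i = b' i) (x : ℂ) :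
    monomial b x - monomial b' (x * ω ^ (∑ j ∈ J, (c j : ℤ) * ((b j : ℤ) - (b' j : ℤ))))
      ∈ idealI n ω J K c := by
  classical
  refine Ideal.Quotient.eq.mp ?_
  rw [mk_monomial n ω hω0, mk_monomial n ω hω0]
  have hprod : ∏ i ∈ Jᶜ, (X i : MvPolynomial (Fin (n - 1)) ℂ) ^ b i
      = ∏ i ∈ Jᶜ, X i ^ b' i :=
    Finset.prod_congr rfl fun i hi => by rw [hbb i (Finset.mem_compl.mp hi)]
  have hsc : x * ω ^ (∑ j ∈ J, (c j : ℤ) * (b j : ℤ))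
      = x * ω ^ (∑ j ∈ J, (c j : ℤ) * ((b j : ℤ) - (b' j : ℤ)))
        * ω ^ (∑ j ∈ J, (c j : ℤ) * (b' j : ℤ)) := by
    rw [mul_assoc, ← zpow_add₀ hω0]
    congr 2
    rw [← Finset.sum_add_distrib]
    exact Finset.sum_congr rfl fun j _ => by ring
  rw [hprod, hsc]

/-- `A^{H_J} = A^H + I^{H_J}`, where `I^{H_J} = I ∩ A^{H_J}`. -/
theorem stmt3 (n : ℕ) (hn : 2 ≤ n) (ω : ℂ) (hω : IsPrimitiveRoot ω n)
    (J K : Finset (Fin (n - 1))) (hJK : Disjoint J K)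
    (c : Fin (n - 1) → ℕ) (hc : ∀ j, c j ≤ n - 1) :
    {p : MvPolynomial (Fin (n - 1)) ℂ | invHJ n ω J p}
      = {p : MvPolynomial (Fin (n - 1)) ℂ |
          ∃ g h, invH n ω g ∧ (h ∈ idealI n ω J K c ∧ invHJ n ω J h) ∧ p = g + h} := by
  classical
  have hn0 : n ≠ 0 := by omega
  have hω0 : ω ≠ 0 := hω.ne_zero hn0
  ext p
  simp only [Set.mem_setOf_eq]
  constructor
  · intro hp
    have hkey : ∀ b : Fin (n - 1) →₀ ℕ, b ∈ p.support →
        ∃ k : ℤ, ∀ i, i ∉ J → (n : ℤ) ∣ (b i : ℤ) - k * (((i : ℕ) : ℤ) + 1) := by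
      intro b hb
      refine key_nt n hn J (fun i => (b i : ℤ)) ?_
      intro a ha
      have h1 := congrArg (coeff b) (hp a ha)
      rw [coeff_rescale3 n ω hω0] at h1
      have hcb : coeff b p ≠ 0 := mem_support_iff.mp hb
      have hone : ω ^ (∑ i : Fin (n - 1), a i * (b i : ℤ)) = 1 :=
        mul_right_cancel₀ hcb (h1.trans (one_mul (coeff b p)).symm)
      exact (hω.zpow_eq_one_iff_dvd _).mp hone
    choose! k hk using hkey
    set B : (Fin (n - 1) →₀ ℕ) → (Fin (n - 1) →₀ ℕ) := fun b =>
      Finsupp.equivFunOnFinite.symm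
        (fun i => if i ∈ J then ((k b * (((i : ℕ) : ℤ) + 1)) % (n : ℤ)).toNat else b i)
      with hBdef
    have hB : ∀ b i, (B b) i
        = if i ∈ J then ((k b * (((i : ℕ) : ℤ) + 1)) % (n : ℤ)).toNat else b i :=
      fun b i => rfl
    have hBJ : ∀ b, ∀ i, i ∉ J → (B b) i = b i := fun b i hi => by rw [hB, if_neg hi]
    have hBmod : ∀ b ∈ p.support, ∀ i : Fin (n - 1),
        (n : ℤ) ∣ ((B b) i : ℤ) - k b * (((i : ℕ) : ℤ) + 1) := by
      intro b hb i
      by_cases hi : i ∈ J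
      · rw [hB, if_pos hi,
          Int.toNat_of_nonneg (Int.emod_nonneg _ (by exact_mod_cast hn0)),
          Int.emod_def]
        exact ⟨-(k b * (((i : ℕ) : ℤ) + 1) / (n : ℤ)), by ring⟩
      · rw [hB, if_neg hi]
        exact hk b hb i hi
    set x' : (Fin (n - 1) →₀ ℕ) → ℂ := fun b =>
      coeff b p * ω ^ (∑ j ∈ J, (c j : ℤ) * ((b j : ℤ) - ((B b) j : ℤ))) with hx'
    set G : MvPolynomial (Fin (n - 1)) ℂ := ∑ b ∈ p.support, monomial (B b) (x' b) with hG
    have hGinv : invH n ω G := by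
      intro a ha
      have ha' : (n : ℤ) ∣ ∑ i : Fin (n - 1), (((i : ℕ) : ℤ) + 1) * a i := ha
      rw [hG, map_sum]
      refine Finset.sum_congr rfl fun b hb => ?_
      rw [rescale3_monomial n ω hω0]
      have hone : ω ^ (∑ i : Fin (n - 1), a i * ((B b) i : ℤ)) = 1 := by
        refine (hω.zpow_eq_one_iff_dvd _).mpr ?_
        have h1 : (n : ℤ) ∣ ∑ i : Fin (n - 1),
            a i * (((B b) i : ℤ) - k b * (((i : ℕ) : ℤ) + 1)) :=
          Finset.dvd_sum fun i _ => Dvd.dvd.mul_left (hBmod b hb i) _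
        have h2 : (n : ℤ) ∣ k b * ∑ i : Fin (n - 1), (((i : ℕ) : ℤ) + 1) * a i :=
          ha'.mul_left _
        have hsplit : ∑ i : Fin (n - 1), a i * ((B b) i : ℤ)
            = (∑ i : Fin (n - 1), a i * (((B b) i : ℤ) - k b * (((i : ℕ) : ℤ) + 1)))
              + k b * ∑ i : Fin (n - 1), (((i : ℕ) : ℤ) + 1) * a i := by
          rw [Finset.mul_sum, ← Finset.sum_add_distrib]
          exact Finset.sum_congr rfl fun i _ => by ring
        rw [hsplit]
        exact dvd_add h1 h2
      rw [hone, one_smul]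
    refine ⟨G, p - G, hGinv, ⟨?_, ?_⟩, by ring⟩
    · have hp' : p - G = ∑ b ∈ p.support,
          (monomial b (coeff b p) - monomial (B b) (x' b)) := by
        rw [Finset.sum_sub_distrib, ← hG]
        congr 1
        exact p.as_sum
      rw [hp']
      refine Ideal.sum_mem _ fun b hb => ?_
      exact diff_mem_I n ω hω0 J K c b (B b) (fun i hi => (hBJ b i hi).symm) (coeff b p)
    · intro a ha
      rw [map_sub, hp a ha, hGinv a ha.1]
  · rintro ⟨g0, h0, hg0, ⟨hI0, hh0⟩, rfl⟩
    intro a ha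
    rw [map_add, hg0 a ha.1, hh0 a ha]
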